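/- Let c ≥ 2, m ∈ S_c, n = c+1, and consider the equivalence on S_{c+1} generated by replacing a contiguous c-letter factor whose standardization is a cyclic shift of m with a rearrangement of the same letters whose standardization is another cyclic shift of m. Then every non-avoider in S_{c+1} is equivalent to 1 ⇀ m or to 2 ⇀ m (where i ⇀ w increments letters of w that are ≥ i and prepends i). Consequently, there are at most two nontrivial equivalence classes in S_{c+1}. -/

import Mathlib

/-- The standardization (order permutation) of a word with distinct letters. -/
def stdz (w : List ℕ) : List ℕ :=
  w.map (fun x => 1 + w.countP (fun y => decide (y < x)))

/-- `u` is a cyclic shift of `m`. -/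
def IsCyclicShiftOf (u m : List ℕ) : Prop := ∃ a ≤ m.length, u = m.rotate a

/-- One pattern-replacement move for the cyclic-shift relation attached to `m`. -/
def StepCyc (m : List ℕ) (φ ψ : List ℕ) : Prop :=
  ∃ a u v b : List ℕ, φ = a ++ u ++ b ∧ ψ = a ++ v ++ b ∧
    u.length = m.length ∧ u.Perm v ∧
    IsCyclicShiftOf (stdz u) m ∧ IsCyclicShiftOf (stdz v) m

/-- `w` contains a contiguous factor of length `|m|` whose standardization is a cyclic
shift of `m`. -/
def NonAvoider (m w : List ℕ) : Prop :=
  ∃ i, i + m.length ≤ w.length ∧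
    IsCyclicShiftOf (stdz ((w.drop i).take m.length)) m

/-- `i ⇀ w`: increment every letter of `w` that is `≥ i`, then prepend `i`. -/
def harpL (i : ℕ) (w : List ℕ) : List ℕ :=
  i :: w.map (fun x => if i ≤ x then x + 1 else x)

namespace Aux17

def inc (i x : ℕ) : ℕ := if i ≤ x then x + 1 else x

def harpR (i : ℕ) (w : List ℕ) : List ℕ := w.map (inc i) ++ [i]

lemma harpL_eq (i : ℕ) (w : List ℕ) : harpL i w = i :: w.map (inc i) := rfl

lemma inc_strictMono (i : ℕ) : StrictMono (inc i) := by
  intro a b h; unfold inc; split_ifs <;> omega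

lemma stdz_map (f : ℕ → ℕ) (hf : StrictMono f) (w : List ℕ) :
    stdz (w.map f) = stdz w := by
  unfold stdz
  rw [List.map_map]
  apply List.map_congr_left
  intro a _
  simp only [Function.comp]
  congr 1
  rw [List.countP_map]
  apply List.countP_congr
  intro b _
  simp [Function.comp, hf.lt_iff_lt]

lemma mem_range'_iff {x s n : ℕ} : x ∈ List.range' s n ↔ s ≤ x ∧ x < s + n := by
  simp [List.mem_range']
  constructor
  · rintro ⟨i, hi, rfl⟩; omega
  · intro h; exact ⟨x - s, by omega, by omega⟩

lemma countP_lt_range' (x n : ℕ) :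
    (List.range' 1 n).countP (fun y => decide (y < x)) = min (x - 1) n := by
  induction n with
  | zero => simp
  | succ n ih =>
    rw [List.range'_concat, List.countP_append, ih]
    simp only [one_mul]
    by_cases h : 1 + n < x <;> simp [List.countP_cons, h] <;> omega

lemma stdz_of_perm_range' {c : ℕ} {p : List ℕ} (hp : p.Perm (List.range' 1 c)) :
    stdz p = p := by
  unfold stdz
  conv_rhs => rw [← List.map_id p]
  apply List.map_congr_left
  intro x hx
  have hx' : x ∈ List.range' 1 c := hp.mem_iff.mp hx
  rw [mem_range'_iff] at hx'
  rw [hp.countP_eq, countP_lt_range']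
  simp; omega

lemma map_succ_range' (s r : ℕ) :
    (List.range' s r).map (fun y => y + 1) = List.range' (s + 1) r := by
  induction r generalizing s with
  | zero => simp
  | succ r ih => rw [List.range'_succ, List.range'_succ, List.map_cons, ih]

lemma harpL_perm_range' {c x : ℕ} (h1 : 1 ≤ x) (h2 : x ≤ c + 1) :
    (x :: (List.range' 1 c).map (inc x)).Perm (List.range' 1 (c + 1)) := by
  obtain ⟨k, rfl⟩ : ∃ k, x = 1 + k := ⟨x - 1, by omega⟩
  obtain ⟨r, rfl⟩ : ∃ r, c = k + r := ⟨c - k, by omega⟩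
  have hsplit : List.range' 1 (k + r) = List.range' 1 k ++ List.range' (1 + k) r := by
    rw [List.range'_append_1]
  rw [hsplit, List.map_append]
  have h1' : (List.range' 1 k).map (inc (1 + k)) = List.range' 1 k := by
    rw [show (List.range' 1 k).map (inc (1+k)) = (List.range' 1 k).map id from ?_, List.map_id]
    apply List.map_congr_left
    intro a ha
    rw [mem_range'_iff] at ha
    simp [inc]; omega
  have h2' : (List.range' (1 + k) r).map (inc (1 + k)) = List.range' (2 + k) r := by
    rw [show (List.range' (1+k) r).map (inc (1+k)) = (List.range' (1+k) r).map (fun y => y + 1) from ?_,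
      map_succ_range']
    · have h3 : 1 + k + 1 = 2 + k := by omega
      rw [h3]
    apply List.map_congr_left
    intro a ha
    rw [mem_range'_iff] at ha
    simp [inc]; omega
  rw [h1', h2']
  refine List.Perm.trans (List.perm_middle.symm) ?_
  have h4 : (1 + k) :: List.range' (2 + k) r = List.range' (1 + k) (r + 1) := by
    rw [List.range'_succ]
    have h3 : 1 + k + 1 = 2 + k := by omega
    rw [h3]
  rw [h4, List.range'_append_1]
  have h5 : r + 1 + k = k + r + 1 := by omega
  rw [← Nat.add_assoc]

lemma shift_self (m : List ℕ) : IsCyclicShiftOf m m :=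
  ⟨0, Nat.zero_le _, (List.rotate_zero m).symm⟩

lemma stepL {c : ℕ} {m : List ℕ} (hm : m.Perm (List.range' 1 c))
    {p q : List ℕ} (hp : p.Perm (List.range' 1 c)) (hq : q.Perm (List.range' 1 c))
    (hpc : IsCyclicShiftOf p m) (hqc : IsCyclicShiftOf q m) (x : ℕ) :
    StepCyc m (harpL x p) (harpL x q) := by
  refine ⟨[x], p.map (inc x), q.map (inc x), [], by simp [harpL_eq], by simp [harpL_eq],
    by simp [hp.length_eq, hm.length_eq], (hp.trans hq.symm).map _, ?_, ?_⟩
  · rw [stdz_map _ (inc_strictMono x), stdz_of_perm_range' hp]; exact hpc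
  · rw [stdz_map _ (inc_strictMono x), stdz_of_perm_range' hq]; exact hqc

lemma stepR {c : ℕ} {m : List ℕ} (hm : m.Perm (List.range' 1 c))
    {p q : List ℕ} (hp : p.Perm (List.range' 1 c)) (hq : q.Perm (List.range' 1 c))
    (hpc : IsCyclicShiftOf p m) (hqc : IsCyclicShiftOf q m) (x : ℕ) :
    StepCyc m (harpR x p) (harpR x q) := by
  refine ⟨[], p.map (inc x), q.map (inc x), [x], by simp [harpR], by simp [harpR],
    by simp [hp.length_eq, hm.length_eq], (hp.trans hq.symm).map _, ?_, ?_⟩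
  · rw [stdz_map _ (inc_strictMono x), stdz_of_perm_range' hp]; exact hpc
  · rw [stdz_map _ (inc_strictMono x), stdz_of_perm_range' hq]; exact hqc


lemma rotate_append (l1 l2 : List ℕ) (a : ℕ) :
    (l1 ++ a :: l2).rotate l1.length = a :: (l2 ++ l1) := by
  rw [List.rotate_eq_drop_append_take (by simp)]
  rw [List.drop_left' rfl, List.take_left' rfl]
  simp

lemma rotate_append' (l1 l2 : List ℕ) (a : ℕ) :
    (l1 ++ a :: l2).rotate (l1.length + 1) = (l2 ++ l1) ++ [a] := by
  have h : l1 ++ a :: l2 = (l1 ++ [a]) ++ l2 := by simp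
  rw [h, List.rotate_eq_drop_append_take (by simp)]
  rw [show l1.length + 1 = (l1 ++ [a]).length by simp]
  rw [List.drop_left, List.take_left]
  simp

/-- `harpL i m ≡ harpR (i+1) m` for `1 ≤ i ≤ c`. -/
lemma LtoR {c : ℕ} {m : List ℕ} (hm : m.Perm (List.range' 1 c))
    {i : ℕ} (h1 : 1 ≤ i) (h2 : i ≤ c) :
    Relation.EqvGen (StepCyc m) (harpL i m) (harpR (i + 1) m) := by
  have him : i ∈ m := hm.mem_iff.mpr (mem_range'_iff.mpr ⟨h1, by omega⟩)
  obtain ⟨l1, l2, hml⟩ := List.append_of_mem him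
  set d : List ℕ := l2 ++ l1 with hd
  -- basic perms
  have hperm1 : (i :: d).Perm m := by
    rw [hml, hd]
    refine List.Perm.trans ?_ List.perm_middle.symm
    exact (List.perm_append_comm).cons i
  have hperm2 : (d ++ [i]).Perm m :=
    (List.perm_append_singleton i d).trans hperm1
  have hpr1 : (i :: d).Perm (List.range' 1 c) := hperm1.trans hm
  have hpr2 : (d ++ [i]).Perm (List.range' 1 c) := hperm2.trans hm
  -- rotations
  have hrot1 : IsCyclicShiftOf (i :: d) m := by
    refine ⟨l1.length, by rw [hml]; simp, ?_⟩
    rw [hml, rotate_append]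
  have hrot2 : IsCyclicShiftOf (d ++ [i]) m := by
    refine ⟨l1.length + 1, by rw [hml]; simp, ?_⟩
    rw [hml, rotate_append']
  -- i ∉ d
  have hnd : i ∉ d := by
    have : m.Nodup := hm.symm.nodup List.nodup_range'
    rw [hml] at this
    have h1 := this.of_append_right
    have h2 := List.disjoint_of_nodup_append this
    rw [hd]
    intro hmem
    rcases List.mem_append.mp hmem with h | h
    · exact (List.nodup_cons.mp h1).1 h
    · exact h2 h List.mem_cons_self
  -- step 1 : harpL i m → harpL i (d ++ [i])
  have s1 : StepCyc m (harpL i m) (harpL i (d ++ [i])) :=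
    stepL hm hm hpr2 (shift_self m) hrot2 i
  -- step 2 : harpL i (d ++ [i]) → harpR (i+1) m
  have s2 : StepCyc m (harpL i (d ++ [i])) (harpR (i + 1) m) := by
    have hmapd : d.map (inc i) = d.map (inc (i + 1)) := by
      apply List.map_congr_left
      intro a ha
      have : a ≠ i := fun h => hnd (h ▸ ha)
      unfold inc; split_ifs <;> omega
    refine ⟨[], (i :: d).map (inc (i + 1)), m.map (inc (i + 1)), [i + 1], ?_, by simp [harpR], ?_, hperm1.map _, ?_, ?_⟩
    · rw [harpL_eq, List.map_append, hmapd]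
      simp [inc]
    · simpa using hperm1.length_eq
    · rw [stdz_map _ (inc_strictMono (i+1)), stdz_of_perm_range' hpr1]
      exact hrot1
    · rw [stdz_map _ (inc_strictMono (i+1)), stdz_of_perm_range' hm]
      exact shift_self m
  exact (Relation.EqvGen.rel _ _ s1).trans _ _ _ (Relation.EqvGen.rel _ _ s2)

/-- `harpR j m ≡ harpL (j+1) m` for `1 ≤ j ≤ c`. -/
lemma RtoL {c : ℕ} {m : List ℕ} (hm : m.Perm (List.range' 1 c))
    {j : ℕ} (h1 : 1 ≤ j) (h2 : j ≤ c) :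
    Relation.EqvGen (StepCyc m) (harpR j m) (harpL (j + 1) m) := by
  have hjm : j ∈ m := hm.mem_iff.mpr (mem_range'_iff.mpr ⟨h1, by omega⟩)
  obtain ⟨l1, l2, hml⟩ := List.append_of_mem hjm
  set e : List ℕ := l2 ++ l1 with he
  have hperm1 : (j :: e).Perm m := by
    rw [hml, he]
    refine List.Perm.trans ?_ List.perm_middle.symm
    exact (List.perm_append_comm).cons j
  have hperm2 : (e ++ [j]).Perm m :=
    (List.perm_append_singleton j e).trans hperm1
  have hpr1 : (j :: e).Perm (List.range' 1 c) := hperm1.trans hm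
  have hpr2 : (e ++ [j]).Perm (List.range' 1 c) := hperm2.trans hm
  have hrot1 : IsCyclicShiftOf (j :: e) m := by
    refine ⟨l1.length, by rw [hml]; simp, ?_⟩
    rw [hml, rotate_append]
  have hrot2 : IsCyclicShiftOf (e ++ [j]) m := by
    refine ⟨l1.length + 1, by rw [hml]; simp, ?_⟩
    rw [hml, rotate_append']
  have hnd : j ∉ e := by
    have : m.Nodup := hm.symm.nodup List.nodup_range'
    rw [hml] at this
    have ha := this.of_append_right
    have hb := List.disjoint_of_nodup_append this
    rw [he]
    intro hmem
    rcases List.mem_append.mp hmem with h | h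
    · exact (List.nodup_cons.mp ha).1 h
    · exact hb h List.mem_cons_self
  -- step 1 : harpR j m → harpR j (j :: e)
  have s1 : StepCyc m (harpR j m) (harpR j (j :: e)) :=
    stepR hm hm hpr1 (shift_self m) hrot1 j
  -- step 2 : harpR j (j :: e) → harpL (j+1) m
  have s2 : StepCyc m (harpR j (j :: e)) (harpL (j + 1) m) := by
    have hmape : e.map (inc j) = e.map (inc (j + 1)) := by
      apply List.map_congr_left
      intro a ha
      have : a ≠ j := fun h => hnd (h ▸ ha)
      unfold inc; split_ifs <;> omega
    refine ⟨[j + 1], (e ++ [j]).map (inc (j + 1)), m.map (inc (j + 1)), [], ?_, by simp [harpL_eq], ?_, hperm2.map _, ?_, ?_⟩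
    · rw [List.map_append, ← hmape]
      simp [harpR, inc]
    · simpa using hperm2.length_eq
    · rw [stdz_map _ (inc_strictMono (j+1)), stdz_of_perm_range' hpr2]
      exact hrot2
    · rw [stdz_map _ (inc_strictMono (j+1)), stdz_of_perm_range' hm]
      exact shift_self m
  exact (Relation.EqvGen.rel _ _ s1).trans _ _ _ (Relation.EqvGen.rel _ _ s2)


lemma reduceL {c : ℕ} (hc : 2 ≤ c) {m : List ℕ} (hm : m.Perm (List.range' 1 c)) :
    ∀ x, 1 ≤ x → x ≤ c + 1 →
    Relation.EqvGen (StepCyc m) (harpL x m) (harpL 1 m) ∨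
    Relation.EqvGen (StepCyc m) (harpL x m) (harpL 2 m) := by
  intro x
  induction x using Nat.strong_induction_on with
  | _ x ih =>
    intro hx1 hx2
    match x, hx1, hx2, ih with
    | 1, _, _, _ => exact Or.inl (Relation.EqvGen.refl _)
    | 2, _, _, _ => exact Or.inr (Relation.EqvGen.refl _)
    | (y+3), _, hx2, ih =>
      have e4 := RtoL hm (show 1 ≤ y+2 by omega) (show y+2 ≤ c by omega)
      have e3 := LtoR hm (show 1 ≤ y+1 by omega) (show y+1 ≤ c by omega)
      have step : Relation.EqvGen (StepCyc m) (harpL (y+3) m) (harpL (y+1) m) :=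
        Relation.EqvGen.trans _ _ _ (Relation.EqvGen.symm _ _ e4) (Relation.EqvGen.symm _ _ e3)
      rcases ih (y+1) (by omega) (by omega) (by omega) with h | h
      · exact Or.inl (Relation.EqvGen.trans _ _ _ step h)
      · exact Or.inr (Relation.EqvGen.trans _ _ _ step h)

lemma reduceR {c : ℕ} (hc : 2 ≤ c) {m : List ℕ} (hm : m.Perm (List.range' 1 c))
    {x : ℕ} (hx1 : 1 ≤ x) (hx2 : x ≤ c + 1) :
    Relation.EqvGen (StepCyc m) (harpR x m) (harpL 1 m) ∨
    Relation.EqvGen (StepCyc m) (harpR x m) (harpL 2 m) := by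
  by_cases h : x ≤ c
  · have e := RtoL hm hx1 h
    rcases reduceL hc hm (x+1) (by omega) (by omega) with hh | hh
    · exact Or.inl (Relation.EqvGen.trans _ _ _ e hh)
    · exact Or.inr (Relation.EqvGen.trans _ _ _ e hh)
  · have hx : x = c + 1 := by omega
    subst hx
    have e := Relation.EqvGen.symm _ _ (LtoR hm (show 1 ≤ c by omega) le_rfl)
    rcases reduceL hc hm c (by omega) (by omega) with hh | hh
    · exact Or.inl (Relation.EqvGen.trans _ _ _ e hh)
    · exact Or.inr (Relation.EqvGen.trans _ _ _ e hh)

end Aux17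

open Aux17

/-- For `m ∈ S_c` and `n = c + 1`: every non-avoider in `S_{c+1}` is equivalent to
`1 ⇀ m` or to `2 ⇀ m` under the cyclic-shift replacement relation attached to `m`;
consequently there are at most two nontrivial equivalence classes in `S_{c+1}`. -/
theorem stmt17 (c : ℕ) (hc : 2 ≤ c) (m : List ℕ) (hm : m.Perm (List.range' 1 c))
    (w : List ℕ) (hw : w.Perm (List.range' 1 (c + 1))) (hna : NonAvoider m w) :
    Relation.EqvGen (StepCyc m) w (harpL 1 m) ∨
    Relation.EqvGen (StepCyc m) w (harpL 2 m) := by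
  classical
  have hmlen : m.length = c := by simpa using hm.length_eq
  have hwlen : w.length = c + 1 := by simpa using hw.length_eq
  obtain ⟨i, hi, hcs⟩ := hna
  rw [hmlen] at hi hcs
  rw [hwlen] at hi
  have hwne : w ≠ [] := by
    intro h; rw [h] at hwlen; simp at hwlen
  have hile : i ≤ 1 := by omega
  interval_cases i
  · -- i = 0 : factor is w.take c, w = dropLast ++ [last]
    set x := w.getLast hwne with hxdef
    have hxm : x ∈ w := List.getLast_mem hwne
    have hxr : 1 ≤ x ∧ x < 1 + (c+1) := mem_range'_iff.mp (hw.mem_iff.mp hxm)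
    have hdec : w.dropLast ++ [x] = w := List.dropLast_append_getLast hwne
    have htake : w.take c = w.dropLast := by
      rw [List.dropLast_eq_take, hwlen]
      norm_num
    rw [List.drop_zero, htake] at hcs
    have hRperm : (harpR x m).Perm (List.range' 1 (c+1)) := by
      unfold harpR
      refine (List.perm_append_singleton x _).trans ?_
      refine List.Perm.trans ?_ (harpL_perm_range' hxr.1 (by omega))
      exact (hm.map _).cons x
    have huv : w.dropLast.Perm (m.map (inc x)) := by
      have h := hw.trans hRperm.symm
      rw [← hdec] at h
      unfold harpR at h
      exact (List.perm_append_right_iff [x]).mp h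
    have hstep : StepCyc m w (harpR x m) := by
      refine ⟨[], w.dropLast, m.map (inc x), [x], by simp [hdec], by simp [harpR], ?_, huv, hcs, ?_⟩
      · rw [huv.length_eq]; simp [hmlen]
      · rw [stdz_map _ (inc_strictMono x), stdz_of_perm_range' hm]
        exact shift_self m
    rcases reduceR hc hm hxr.1 (by omega) with h | h
    · exact Or.inl (Relation.EqvGen.trans _ _ _ (Relation.EqvGen.rel _ _ hstep) h)
    · exact Or.inr (Relation.EqvGen.trans _ _ _ (Relation.EqvGen.rel _ _ hstep) h)
  · -- i = 1 : factor is w.drop 1, w = head :: tail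
    set x := w.head hwne with hxdef
    have hxm : x ∈ w := List.head_mem hwne
    have hxr : 1 ≤ x ∧ x < 1 + (c+1) := mem_range'_iff.mp (hw.mem_iff.mp hxm)
    have hdec : x :: w.tail = w := List.cons_head_tail hwne
    have hdroplen : (w.drop 1).length = c := by simp [hwlen]
    have htake : (w.drop 1).take c = w.drop 1 := by
      rw [← hdroplen]; exact List.take_length
    rw [htake, List.drop_one] at hcs
    have hLperm : (harpL x m).Perm (List.range' 1 (c+1)) := by
      rw [harpL_eq]
      refine List.Perm.trans ?_ (harpL_perm_range' hxr.1 (by omega))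
      exact (hm.map _).cons x
    have huv : w.tail.Perm (m.map (inc x)) := by
      have h := hw.trans hLperm.symm
      rw [← hdec, harpL_eq] at h
      exact (List.perm_cons x).mp h
    have hstep : StepCyc m w (harpL x m) := by
      refine ⟨[x], w.tail, m.map (inc x), [], by simp [hdec], by simp [harpL_eq], ?_, huv, hcs, ?_⟩
      · rw [huv.length_eq]; simp [hmlen]
      · rw [stdz_map _ (inc_strictMono x), stdz_of_perm_range' hm]
        exact shift_self m
    rcases reduceL hc hm x hxr.1 (by omega) with h | h
    · exact Or.inl (Relation.EqvGen.trans _ _ _ (Relation.EqvGen.rel _ _ hstep) h)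
    · exact Or.inr (Relation.EqvGen.trans _ _ _ (Relation.EqvGen.rel _ _ hstep) h)
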